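/- Let L be a normed space with a metric bilinear operation ◇ (‖ξ◇η‖ = ‖ξ‖‖η‖) and E, F linear spaces. Every element U of L ⊗ (E ⊗ F) can be written as U = Σ_{k=1}^n a_k · (u_k ◇ v_k) for some n ∈ ℕ, a_k ∈ B(L), u_k ∈ L ⊗ E, v_k ∈ L ⊗ F, where u ◇ v denotes the bilinear extension determined by (ξ ⊗ x) ◇ (η ⊗ y) := (ξ ◇ η) ⊗ (x ⊗ y), and a · (ζ ⊗ w) := a(ζ) ⊗ w. -/

import Mathlib

open TensorProduct

/-- The extended diamond operation `(ξ ⊗ x) ◇ (η ⊗ y) = (ξ ◇ η) ⊗ (x ⊗ y)` on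
amplifications. -/
noncomputable def diamondT {L E F : Type*}
    [AddCommGroup L] [Module ℂ L] [AddCommGroup E] [Module ℂ E]
    [AddCommGroup F] [Module ℂ F]
    (d : L →ₗ[ℂ] L →ₗ[ℂ] L) (u : L ⊗[ℂ] E) (v : L ⊗[ℂ] F) : L ⊗[ℂ] (E ⊗[ℂ] F) :=
  TensorProduct.map (TensorProduct.lift d) LinearMap.id
    (TensorProduct.tensorTensorTensorComm ℂ L E L F (u ⊗ₜ[ℂ] v))

lemma diamondT_tmul {L E F : Type*}
    [AddCommGroup L] [Module ℂ L] [AddCommGroup E] [Module ℂ E]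
    [AddCommGroup F] [Module ℂ F]
    (d : L →ₗ[ℂ] L →ₗ[ℂ] L) (ξ η : L) (x : E) (y : F) :
    diamondT d (ξ ⊗ₜ[ℂ] x) (η ⊗ₜ[ℂ] y) = (d ξ η) ⊗ₜ[ℂ] (x ⊗ₜ[ℂ] y) := by
  simp [diamondT, tensorTensorTensorComm_tmul]

/-- If `L` carries a metric diamond operation, every element `U` of
`L ⊗ (E ⊗ F)` can be written as `Σ_k a_k · (u_k ◇ v_k)` with `a_k ∈ B(L)`,
`u_k ∈ L ⊗ E`, `v_k ∈ L ⊗ F`. -/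
theorem exists_diamond_representation
    (L E F : Type*) [NormedAddCommGroup L] [NormedSpace ℂ L] [Nontrivial L]
    [AddCommGroup E] [Module ℂ E] [AddCommGroup F] [Module ℂ F]
    (d : L →ₗ[ℂ] L →ₗ[ℂ] L) (hd : ∀ ξ η : L, ‖d ξ η‖ = ‖ξ‖ * ‖η‖) :
    ∀ U : L ⊗[ℂ] (E ⊗[ℂ] F),
      ∃ (n : ℕ) (a : Fin n → (L →L[ℂ] L)) (u : Fin n → L ⊗[ℂ] E) (v : Fin n → L ⊗[ℂ] F),
        U = ∑ k, LinearMap.rTensor (E ⊗[ℂ] F) ((a k : L →ₗ[ℂ] L)) (diamondT d (u k) (v k)) := by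
  -- pick a nonzero vector ξ₀
  obtain ⟨ξ₀, hξ₀⟩ := exists_ne (0 : L)
  set ζ : L := d ξ₀ ξ₀ with hζ
  have hζnorm : ‖ζ‖ = ‖ξ₀‖ * ‖ξ₀‖ := hd ξ₀ ξ₀
  have hζne : ζ ≠ 0 := by
    intro h
    rw [h, norm_zero] at hζnorm
    exact hξ₀ (norm_eq_zero.mp (by nlinarith [norm_nonneg ξ₀, (mul_self_eq_zero).mp hζnorm.symm]))
  obtain ⟨g, hg1, hgζ⟩ := exists_dual_vector ℂ ζ (norm_ne_zero_iff.mpr hζne)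
  -- a functional with g' ζ = 1
  set g' : L →L[ℂ] ℂ := (‖ζ‖ : ℂ)⁻¹ • g with hg'
  have hg'ζ : g' ζ = 1 := by
    simp only [hg', ContinuousLinearMap.smul_apply, hgζ, smul_eq_mul]
    exact inv_mul_cancel₀ (by exact_mod_cast norm_ne_zero_iff.mpr hζne)
  -- closure under addition
  have hadd : ∀ U₁ U₂ : L ⊗[ℂ] (E ⊗[ℂ] F),
      (∃ (n : ℕ) (a : Fin n → (L →L[ℂ] L)) (u : Fin n → L ⊗[ℂ] E) (v : Fin n → L ⊗[ℂ] F),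
        U₁ = ∑ k, LinearMap.rTensor (E ⊗[ℂ] F) ((a k : L →ₗ[ℂ] L)) (diamondT d (u k) (v k))) →
      (∃ (n : ℕ) (a : Fin n → (L →L[ℂ] L)) (u : Fin n → L ⊗[ℂ] E) (v : Fin n → L ⊗[ℂ] F),
        U₂ = ∑ k, LinearMap.rTensor (E ⊗[ℂ] F) ((a k : L →ₗ[ℂ] L)) (diamondT d (u k) (v k))) →
      ∃ (n : ℕ) (a : Fin n → (L →L[ℂ] L)) (u : Fin n → L ⊗[ℂ] E) (v : Fin n → L ⊗[ℂ] F),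
        U₁ + U₂ = ∑ k, LinearMap.rTensor (E ⊗[ℂ] F) ((a k : L →ₗ[ℂ] L)) (diamondT d (u k) (v k)) := by
    rintro U₁ U₂ ⟨n₁, a₁, u₁, v₁, rfl⟩ ⟨n₂, a₂, u₂, v₂, rfl⟩
    refine ⟨n₁ + n₂, Fin.append a₁ a₂, Fin.append u₁ u₂, Fin.append v₁ v₂, ?_⟩
    rw [Fin.sum_univ_add]
    simp [Fin.append_left, Fin.append_right]
  intro U
  induction U using TensorProduct.induction_on with
  | zero => exact ⟨0, Fin.elim0, Fin.elim0, Fin.elim0, by simp⟩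
  | add U₁ U₂ h₁ h₂ => exact hadd U₁ U₂ h₁ h₂
  | tmul ξ z =>
    -- induct on z ∈ E ⊗ F
    induction z using TensorProduct.induction_on with
    | zero => exact ⟨0, Fin.elim0, Fin.elim0, Fin.elim0, by simp⟩
    | add z₁ z₂ h₁ h₂ =>
      have := hadd (ξ ⊗ₜ[ℂ] z₁) (ξ ⊗ₜ[ℂ] z₂) h₁ h₂
      rwa [← TensorProduct.tmul_add] at this
    | tmul x y =>
      refine ⟨1, fun _ => g'.smulRight ξ, fun _ => ξ₀ ⊗ₜ[ℂ] x, fun _ => ξ₀ ⊗ₜ[ℂ] y, ?_⟩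
      simp [diamondT_tmul, ← hζ, hg'ζ]
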